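/- For every real α > 0, the sequence 2^(n−2) · (1/2 − α/√n − 1/n)^(n/2 − α√n) · (1/2 + α/√n + 1/n)^(n/2 + α√n), where the powers are real-exponent powers and n ranges over natural numbers large enough that 1/2 − α/√n − 1/n > 0, converges as n → ∞ to e^(2α²)/4. -/

import Mathlib

open Filter Real Finset

noncomputable def Elog (u : ℝ) : ℝ := Real.log (1 + u) - u + u ^ 2 / 2

lemma Elog_bound {u : ℝ} (hu : |u| < 1) : |Elog u| ≤ |u| ^ 3 / (1 - |u|) := by
  have h := Real.abs_log_sub_add_sum_range_le (x := -u) (by rwa [abs_neg]) 2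
  rw [abs_neg] at h
  have h2 : (∑ i ∈ Finset.range 2, (-u) ^ (i + 1) / (i + 1)) = -u + u ^ 2 / 2 := by
    simp [Finset.sum_range_succ]
    ring
  rw [h2, show (1 : ℝ) - -u = 1 + u from by ring] at h
  have h3 : Elog u = -u + u ^ 2 / 2 + Real.log (1 + u) := by unfold Elog; ring
  rw [h3]
  exact h

lemma tendsto_sqrt_nat : Tendsto (fun n : ℕ => Real.sqrt n) atTop atTop := by
  apply Filter.tendsto_atTop_atTop.2
  intro b
  obtain ⟨N, hN⟩ := exists_nat_ge (b ^ 2)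
  refine ⟨N, fun n hn => ?_⟩
  have h1 : b ^ 2 ≤ (n : ℝ) := hN.trans (by exact_mod_cast hn)
  calc b ≤ |b| := le_abs_self b
    _ = Real.sqrt (b ^ 2) := (Real.sqrt_sq_eq_abs b).symm
    _ ≤ Real.sqrt n := Real.sqrt_le_sqrt h1

/-- For every `α > 0`,
`2^(n-2) · (1/2 - α/√n - 1/n)^(n/2 - α√n) · (1/2 + α/√n + 1/n)^(n/2 + α√n)`
(real-exponent powers) converges to `e^(2α²)/4` as `n → ∞`. -/
theorem tendsto_interval_length_ratio (α : ℝ) (hα : 0 < α) :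
    Filter.Tendsto (fun n : ℕ =>
      (2 : ℝ) ^ ((n : ℝ) - 2) *
        (1 / 2 - α / Real.sqrt n - 1 / n) ^ ((n : ℝ) / 2 - α * Real.sqrt n) *
        (1 / 2 + α / Real.sqrt n + 1 / n) ^ ((n : ℝ) / 2 + α * Real.sqrt n))
      Filter.atTop (nhds (Real.exp (2 * α ^ 2) / 4)) := by
  have hev : ∀ᶠ n : ℕ in atTop, max (1 / α) (8 * α) ≤ Real.sqrt n :=
    tendsto_sqrt_nat.eventually_ge_atTop _
  -- collected elementary facts about large n
  have hfacts : ∀ᶠ n : ℕ in atTop,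
      0 < (n : ℝ) ∧
      0 < α / Real.sqrt n + 1 / n ∧
      α / Real.sqrt n + 1 / n ≤ 2 * α / Real.sqrt n ∧
      2 * (α / Real.sqrt n + 1 / n) ≤ 1 / 2 ∧
      α * Real.sqrt n ≤ (n : ℝ) / 2 := by
    filter_upwards [hev] with n hn
    have h1α : 1 / α ≤ Real.sqrt n := le_trans (le_max_left _ _) hn
    have h8α : 8 * α ≤ Real.sqrt n := le_trans (le_max_right _ _) hn
    have hs0 : 0 < Real.sqrt n := lt_of_lt_of_le (by positivity) h8α
    have hn0 : (0 : ℝ) < n := Real.sqrt_pos.mp hs0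
    have hss : Real.sqrt n * Real.sqrt n = n := Real.mul_self_sqrt (le_of_lt hn0)
    have h1 : 1 ≤ α * Real.sqrt n := by
      rw [div_le_iff₀ hα] at h1α; linarith [mul_comm α (Real.sqrt n)]
    refine ⟨hn0, by positivity, ?_, ?_, ?_⟩
    · have h5 : 1 / (n : ℝ) ≤ α / Real.sqrt n := by
        rw [div_le_div_iff₀ hn0 hs0]
        nlinarith
      have h6 : 2 * α / Real.sqrt n = α / Real.sqrt n + α / Real.sqrt n := by ring
      rw [h6]
      have h7 : 0 < α / Real.sqrt n := by positivity
      linarith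
    · have h4 : 4 * α / Real.sqrt n ≤ 1 / 2 := by
        rw [div_le_div_iff₀ hs0 (by norm_num : (0:ℝ) < 2)]
        nlinarith
      have : 1 / (n : ℝ) ≤ α / Real.sqrt n := by
        rw [div_le_div_iff₀ hn0 hs0]; nlinarith
      have e : 2 * (α / Real.sqrt n + 1 / n) ≤ 4 * (α / Real.sqrt n) := by linarith
      calc 2 * (α / Real.sqrt n + 1 / n) ≤ 4 * (α / Real.sqrt n) := e
        _ = 4 * α / Real.sqrt n := by ring
        _ ≤ 1 / 2 := h4
    · nlinarith
  -- the remainder tends to 0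
  have hR : Tendsto (fun n : ℕ =>
      ((n : ℝ) / 2 - α * Real.sqrt n) * Elog (-(2 * (α / Real.sqrt n + 1 / n))) +
      ((n : ℝ) / 2 + α * Real.sqrt n) * Elog (2 * (α / Real.sqrt n + 1 / n)))
      atTop (nhds 0) := by
    apply squeeze_zero_norm' (a := fun n : ℕ => 256 * α ^ 3 / Real.sqrt n)
    · filter_upwards [hfacts] with n ⟨hn0, ha0, ha2, ha12, hαn⟩
      set s := Real.sqrt n with hs
      set a := α / s + 1 / (n : ℝ) with ha
      clear_value s a
      have hs0 : 0 < s := by rw [hs]; exact Real.sqrt_pos.mpr hn0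
      have hss : s * s = n := by rw [hs]; exact Real.mul_self_sqrt (le_of_lt hn0)
      have habs : |2 * a| = 2 * a := abs_of_pos (by linarith)
      have hu1 : |2 * a| < 1 := by rw [habs]; linarith
      have hE2 : |Elog (2 * a)| ≤ 16 * a ^ 3 := by
        refine le_trans (Elog_bound hu1) ?_
        rw [habs]
        have : (2 * a) ^ 3 / (1 - 2 * a) ≤ (2 * a) ^ 3 / (1 / 2) :=
          div_le_div_of_nonneg_left (by positivity) (by norm_num) (by linarith)
        calc (2*a)^3 / (1 - 2*a) ≤ (2*a)^3 / (1/2) := this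
          _ = 16 * a ^ 3 := by ring
      have hE1 : |Elog (-(2 * a))| ≤ 16 * a ^ 3 := by
        refine le_trans (Elog_bound (by rwa [abs_neg])) ?_
        rw [abs_neg, habs]
        have : (2 * a) ^ 3 / (1 - 2 * a) ≤ (2 * a) ^ 3 / (1 / 2) :=
          div_le_div_of_nonneg_left (by positivity) (by norm_num) (by linarith)
        calc (2*a)^3 / (1 - 2*a) ≤ (2*a)^3 / (1/2) := this
          _ = 16 * a ^ 3 := by ring
      have hp : |(n : ℝ) / 2 - α * s| ≤ (n : ℝ) := by
        rw [abs_le]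
        constructor <;> nlinarith [hs0.le, mul_pos hα hs0]
      have hq : |(n : ℝ) / 2 + α * s| ≤ (n : ℝ) := by
        rw [abs_le]
        constructor <;> nlinarith [mul_pos hα hs0]
      have ha3 : a ^ 3 ≤ (2 * α / s) ^ 3 := by
        exact pow_le_pow_left₀ (le_of_lt ha0) ha2 3
      calc ‖((n : ℝ) / 2 - α * s) * Elog (-(2 * a)) + ((n : ℝ) / 2 + α * s) * Elog (2 * a)‖
          ≤ |((n : ℝ) / 2 - α * s)| * |Elog (-(2 * a))| + |((n : ℝ) / 2 + α * s)| * |Elog (2 * a)| := by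
            rw [Real.norm_eq_abs]
            refine le_trans (abs_add_le _ _) ?_
            rw [abs_mul, abs_mul]
        _ ≤ (n : ℝ) * (16 * a ^ 3) + (n : ℝ) * (16 * a ^ 3) := by
            gcongr <;> exact abs_nonneg _
        _ = 32 * (n : ℝ) * a ^ 3 := by ring
        _ ≤ 32 * (n : ℝ) * (2 * α / s) ^ 3 := by gcongr
        _ = 256 * α ^ 3 / s := by
            rw [← hss]
            field_simp
            ring
    · have : Tendsto (fun n : ℕ => (Real.sqrt n)⁻¹) atTop (nhds 0) :=
        tendsto_sqrt_nat.inv_tendsto_atTop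
      simpa [div_eq_mul_inv] using this.const_mul (256 * α ^ 3)
  -- the log-sum tends to 2α²
  have hL : Tendsto (fun n : ℕ =>
      ((n : ℝ) / 2 - α * Real.sqrt n) * Real.log (1 - 2 * (α / Real.sqrt n + 1 / n)) +
      ((n : ℝ) / 2 + α * Real.sqrt n) * Real.log (1 + 2 * (α / Real.sqrt n + 1 / n)))
      atTop (nhds (2 * α ^ 2)) := by
    have hmain : Tendsto (fun n : ℕ => 2 * α ^ 2 - 2 / (n : ℝ)) atTop (nhds (2 * α ^ 2)) := by
      have h2 : Tendsto (fun n : ℕ => 2 / (n : ℝ)) atTop (nhds 0) := by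
        simpa [div_eq_mul_inv] using (tendsto_one_div_atTop_nhds_zero_nat : Tendsto (fun n : ℕ => 1 / (n : ℝ)) atTop (nhds 0)).const_mul 2
      simpa using tendsto_const_nhds.sub h2
    have hsum := hmain.add hR
    rw [add_zero] at hsum
    refine hsum.congr' ?_
    filter_upwards [hfacts] with n ⟨hn0, _, _, _, _⟩
    have hs0 : 0 < Real.sqrt n := Real.sqrt_pos.mpr hn0
    have hss : Real.sqrt n ^ 2 = (n : ℝ) := Real.sq_sqrt (le_of_lt hn0)
    set s := Real.sqrt n with hs
    set a := α / s + 1 / (n : ℝ) with ha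
    clear_value s a
    have e1 : Real.log (1 - 2 * a) = Elog (-(2 * a)) - 2 * a - 2 * a ^ 2 := by
      have : Elog (-(2 * a)) = Real.log (1 - 2 * a) + 2 * a + 2 * a ^ 2 := by
        unfold Elog
        rw [show (1 : ℝ) + -(2 * a) = 1 - 2 * a from by ring]
        ring
      linarith
    have e2 : Real.log (1 + 2 * a) = Elog (2 * a) + 2 * a - 2 * a ^ 2 := by
      unfold Elog; ring
    rw [e1, e2, ha, ← hss]
    have hn0' : (n : ℝ) ≠ 0 := ne_of_gt hn0
    field_simp
    ring
  -- rewrite original sequence as exp of the log-sum minus 2 log 2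
  have hexp : Tendsto (fun n : ℕ => Real.exp (
      (((n : ℝ) / 2 - α * Real.sqrt n) * Real.log (1 - 2 * (α / Real.sqrt n + 1 / n)) +
      ((n : ℝ) / 2 + α * Real.sqrt n) * Real.log (1 + 2 * (α / Real.sqrt n + 1 / n)))
      - 2 * Real.log 2)) atTop (nhds (Real.exp (2 * α ^ 2) / 4)) := by
    have h4 : Real.exp (2 * α ^ 2 - 2 * Real.log 2) = Real.exp (2 * α ^ 2) / 4 := by
      rw [Real.exp_sub]
      congr 1
      rw [two_mul, Real.exp_add, Real.exp_log (by norm_num : (0:ℝ) < 2)]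
      norm_num
    rw [← h4]
    exact (Real.continuous_exp.tendsto _).comp (hL.sub_const (2 * Real.log 2))
  refine hexp.congr' ?_
  filter_upwards [hfacts] with n ⟨hn0, ha0, ha2, ha12, hαn⟩
  have hs0 : 0 < Real.sqrt n := Real.sqrt_pos.mpr hn0
  set s := Real.sqrt n with hs
  set a := α / s + 1 / (n : ℝ) with ha
  clear_value s a
  have hb1 : (0 : ℝ) < 1 - 2 * a := by linarith
  have hb2 : (0 : ℝ) < 1 + 2 * a := by linarith
  have hbase1 : (1 / 2 - α / s - 1 / (n : ℝ)) = (1 - 2 * a) / 2 := by rw [ha]; ring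
  have hbase2 : (1 / 2 + α / s + 1 / (n : ℝ)) = (1 + 2 * a) / 2 := by rw [ha]; ring
  have hp1 : (0 : ℝ) < (1 - 2 * a) / 2 := by linarith
  have hp2 : (0 : ℝ) < (1 + 2 * a) / 2 := by linarith
  rw [hbase1, hbase2,
    Real.rpow_def_of_pos (by norm_num : (0:ℝ) < 2),
    Real.rpow_def_of_pos hp1, Real.rpow_def_of_pos hp2,
    ← Real.exp_add, ← Real.exp_add]
  congr 1
  rw [Real.log_div (ne_of_gt hb1) (by norm_num), Real.log_div (ne_of_gt hb2) (by norm_num)]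
  ring
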